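/- Let f : E → ℝ be uniformly convex of degree q with constant σ > 0, where 2 ≤ q < p + 1 and p ≥ 1 is an integer, and let f* be its minimum value. Fix L > 0 and let (x_k)_{k≥0} be a sequence in E such that, for every k, there exists a p-th order surrogate g_k of f at x_k with error constant L, and x_{k+1} is a global minimizer of g_k over E. Then for every k ≥ 0: f(x_{k+1}) − f* ≤ (L/(p+1)!) · (q/σ)^{(p+1)/q} · (f(x_k) − f*)^{(p+1)/q}. -/

import Mathlib

open scoped RealInnerProductSpace BigOperators
open Set

variable {E : Type*} [NormedAddCommGroup E] [InnerProductSpace ℝ E] [FiniteDimensional ℝ E]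

/-- `ψ : E → ℝ` is `p` times continuously differentiable and its `p`-th Fréchet
derivative is `L`-Lipschitz. -/
def HasLipschitzDerivOfOrder (p : ℕ) (L : ℝ) (ψ : E → ℝ) : Prop :=
  ContDiff ℝ p ψ ∧
    ∀ x y : E, ‖iteratedFDeriv ℝ p ψ x - iteratedFDeriv ℝ p ψ y‖ ≤ L * ‖x - y‖

/-- `g` is a `p`-th order surrogate of `f` at `x` with error constant `L`. -/
def IsSurrogate (p : ℕ) (L : ℝ) (f g : E → ℝ) (x : E) : Prop :=
  (∀ y : E, f y ≤ g y) ∧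
  HasLipschitzDerivOfOrder p L (fun y => g y - f y) ∧
  g x - f x = 0 ∧
  ∀ i : ℕ, 1 ≤ i → i ≤ p → iteratedFDeriv ℝ i (fun y => g y - f y) x = 0

/-- `v` is a subgradient of `f` at `x`. -/
def SubgradAt (f : E → ℝ) (x v : E) : Prop :=
  ∀ y : E, f x + ⟪v, y - x⟫ ≤ f y

/-- `f` is uniformly convex of degree `q` with constant `σ`. -/
def UniformlyConvexOfDegree (q σ : ℝ) (f : E → ℝ) : Prop :=
  ∀ x v : E, SubgradAt f x v →
    ∀ y : E, f x + ⟪v, y - x⟫ + σ / q * ‖y - x‖ ^ q ≤ f y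



lemma taylor_like_bound {E : Type*} [NormedAddCommGroup E] [InnerProductSpace ℝ E]
    {h : E → ℝ} {p : ℕ} (hp : 1 ≤ p) {L : ℝ}
    (hcd : ContDiff ℝ p h)
    (hlip : ∀ a b : E, ‖iteratedFDeriv ℝ p h a - iteratedFDeriv ℝ p h b‖ ≤ L * ‖a - b‖)
    (x : E) (h0 : h x = 0)
    (hd : ∀ i : ℕ, 1 ≤ i → i ≤ p → iteratedFDeriv ℝ i h x = 0)
    (y : E) :
    |h y| ≤ L / (Nat.factorial (p + 1) : ℝ) * ‖y - x‖ ^ (p + 1) := by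
  set v := y - x with hv
  have key : ∀ j : ℕ, j ≤ p → ∀ t ∈ Icc (0:ℝ) 1,
      ‖iteratedFDeriv ℝ (p - j) h (x + t • v)‖ ≤
        L * ‖v‖ ^ (j + 1) * t ^ (j + 1) / (Nat.factorial (j + 1) : ℝ) := by
    intro j
    induction j with
    | zero =>
      intro _ t ht
      have h1 := hlip (x + t • v) x
      rw [hd p hp le_rfl, sub_zero] at h1
      have h2 : ‖(x + t • v) - x‖ = t * ‖v‖ := by
        simp [norm_smul, abs_of_nonneg ht.1]
      rw [h2] at h1
      simpa [Nat.sub_zero, Nat.factorial] using h1.trans_eq (by ring)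
    | succ j IH =>
      intro hjp t ht
      have hjp' : j ≤ p := Nat.le_of_succ_le hjp
      set m := p - (j + 1) with hm
      have hm1 : m + 1 = p - j := by omega
      have hmp : m < p := by omega
      have hdiff : Differentiable ℝ (iteratedFDeriv ℝ m h) :=
        hcd.differentiable_iteratedFDeriv (by exact_mod_cast hmp)
      have curve : ∀ s : ℝ, HasDerivAt (fun s : ℝ => x + s • v) v s := by
        intro s
        simpa using ((hasDerivAt_id s).smul_const v).const_add x
      have hf' : ∀ s : ℝ, HasDerivAt (fun s : ℝ => iteratedFDeriv ℝ m h (x + s • v))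
          ((fderiv ℝ (iteratedFDeriv ℝ m h) (x + s • v)) v) s := by
        intro s
        exact ((hdiff (x + s • v)).hasFDerivAt).comp_hasDerivAt s (curve s)
      set c : ℝ := L * ‖v‖ ^ (j + 2) / (Nat.factorial (j + 2) : ℝ) with hc
      have hB : ∀ s : ℝ, HasDerivAt (fun s : ℝ => c * s ^ (j + 2))
          (c * ((j + 2) * s ^ (j + 1))) s := by
        intro s
        simpa using (hasDerivAt_pow (j + 2) s).const_mul c
      have ha : ‖iteratedFDeriv ℝ m h (x + (0:ℝ) • v)‖ ≤ c * (0:ℝ) ^ (j + 2) := by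
        have hx0 : x + (0:ℝ) • v = x := by simp
        rw [hx0]
        rcases Nat.eq_zero_or_pos m with hm0 | hm0
        · rw [hm0]
          simp [norm_iteratedFDeriv_zero, h0]
        · rw [hd m hm0 (by omega)]
          simp
      have fact_pos : (0:ℝ) < (Nat.factorial (j + 1) : ℝ) := by
        exact_mod_cast Nat.factorial_pos _
      have fact_pos2 : (0:ℝ) < (Nat.factorial (j + 2) : ℝ) := by
        exact_mod_cast Nat.factorial_pos _
      have bound : ∀ s ∈ Ico (0:ℝ) 1,
          ‖(fderiv ℝ (iteratedFDeriv ℝ m h) (x + s • v)) v‖ ≤ c * ((j + 2) * s ^ (j + 1)) := by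
        intro s hs
        have b1 : ‖(fderiv ℝ (iteratedFDeriv ℝ m h) (x + s • v)) v‖ ≤
            ‖fderiv ℝ (iteratedFDeriv ℝ m h) (x + s • v)‖ * ‖v‖ :=
          ContinuousLinearMap.le_opNorm _ _
        have b2 : ‖fderiv ℝ (iteratedFDeriv ℝ m h) (x + s • v)‖ =
            ‖iteratedFDeriv ℝ (m + 1) h (x + s • v)‖ := norm_fderiv_iteratedFDeriv
        have b3 := IH hjp' s ⟨hs.1, hs.2.le⟩
        rw [← hm1] at b3
        calc ‖(fderiv ℝ (iteratedFDeriv ℝ m h) (x + s • v)) v‖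
            ≤ ‖iteratedFDeriv ℝ (m + 1) h (x + s • v)‖ * ‖v‖ := by rw [← b2]; exact b1
          _ ≤ (L * ‖v‖ ^ (j + 1) * s ^ (j + 1) / (Nat.factorial (j + 1) : ℝ)) * ‖v‖ :=
              mul_le_mul_of_nonneg_right b3 (norm_nonneg v)
          _ = c * ((j + 2) * s ^ (j + 1)) := by
              rw [hc]
              have : (Nat.factorial (j + 2) : ℝ) = (j + 2) * (Nat.factorial (j + 1) : ℝ) := by
                rw [show j + 2 = (j+1) + 1 from rfl, Nat.factorial_succ]
                push_cast; ring
              rw [this]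
              field_simp [this]
              ring
      have main := image_norm_le_of_norm_deriv_right_le_deriv_boundary
        (f := fun s : ℝ => iteratedFDeriv ℝ m h (x + s • v))
        (a := (0:ℝ)) (b := 1)
        (fun s _ => (hf' s).continuousAt.continuousWithinAt)
        (fun s _ => (hf' s).hasDerivWithinAt)
        ha hB bound ht
      calc ‖iteratedFDeriv ℝ (p - (j + 1)) h (x + t • v)‖ ≤ c * t ^ (j + 2) := main
        _ = L * ‖v‖ ^ (j + 1 + 1) * t ^ (j + 1 + 1) / (Nat.factorial (j + 1 + 1) : ℝ) := by
            rw [hc]; ring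
  have final := key p le_rfl 1 ⟨zero_le_one, le_rfl⟩
  have h1 : x + (1:ℝ) • v = y := by simp [hv]
  rw [Nat.sub_self, h1, norm_iteratedFDeriv_zero] at final
  calc |h y| = ‖h y‖ := rfl
    _ ≤ L * ‖v‖ ^ (p + 1) * (1:ℝ) ^ (p + 1) / (Nat.factorial (p + 1) : ℝ) := final
    _ = L / (Nat.factorial (p + 1) : ℝ) * ‖y - x‖ ^ (p + 1) := by rw [hv]; ring

/-- Local superlinear convergence in function values of GHOM for uniformly convex
objectives of degree `q < p + 1` (without convexity of the error functions). -/
theorem ghom_uniformly_convex_superlinear_funvals'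
    (f : E → ℝ) (q σ : ℝ) (hσ : 0 < σ)
    (p : ℕ) (hp : 1 ≤ p) (hq : 2 ≤ q) (hqp : q < (p : ℝ) + 1)
    (huc : UniformlyConvexOfDegree q σ f)
    (xstar : E) (hmin : ∀ y : E, f xstar ≤ f y)
    (L : ℝ) (hL : 0 < L)
    (x : ℕ → E)
    (hstep : ∀ k : ℕ, ∃ g : E → ℝ, IsSurrogate p L f g (x k) ∧
      ∀ y : E, g (x (k + 1)) ≤ g y) :
    ∀ k : ℕ,
      f (x (k + 1)) - f xstar ≤
        L / (Nat.factorial (p + 1) : ℝ) * (q / σ) ^ (((p : ℝ) + 1) / q) *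
          (f (x k) - f xstar) ^ (((p : ℝ) + 1) / q) := by
  intro k
  obtain ⟨g, ⟨hub, ⟨hcd, hlip⟩, hx0, hdi⟩, hmin'⟩ := hstep k
  have hq0 : (0:ℝ) < q := lt_of_lt_of_le two_pos hq
  have hΔ : 0 ≤ f (x k) - f xstar := sub_nonneg.2 (hmin _)
  have hsub : SubgradAt f xstar 0 := by
    intro y
    simpa using hmin y
  have hucx := huc xstar 0 hsub (x k)
  rw [inner_zero_left] at hucx
  have hnorm : ‖x k - xstar‖ ^ q ≤ q / σ * (f (x k) - f xstar) := by
    have h1 : σ / q * ‖x k - xstar‖ ^ q ≤ f (x k) - f xstar := by linarith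
    have h2 : (0:ℝ) < σ / q := div_pos hσ hq0
    calc ‖x k - xstar‖ ^ q = (q / σ) * (σ / q * ‖x k - xstar‖ ^ q) := by
          field_simp
      _ ≤ q / σ * (f (x k) - f xstar) :=
          mul_le_mul_of_nonneg_left h1 (le_of_lt (div_pos hq0 hσ))
  have htay : |g xstar - f xstar| ≤
      L / (Nat.factorial (p + 1) : ℝ) * ‖xstar - x k‖ ^ (p + 1) :=
    taylor_like_bound hp hcd hlip (x k) hx0 hdi xstar
  have hcoef : (0:ℝ) ≤ L / (Nat.factorial (p + 1) : ℝ) :=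
    div_nonneg hL.le (by positivity)
  have step1 : f (x (k + 1)) - f xstar ≤
      L / (Nat.factorial (p + 1) : ℝ) * ‖xstar - x k‖ ^ (p + 1) := by
    have h2 : f (x (k + 1)) ≤ g xstar := le_trans (hub _) (hmin' xstar)
    have h3 := le_abs_self (g xstar - f xstar)
    linarith
  set a : ℝ := ‖xstar - x k‖ with ha
  have ha0 : 0 ≤ a := norm_nonneg _
  have he0 : 0 ≤ ((p : ℝ) + 1) / q := div_nonneg (by positivity) hq0.le
  have hpow : a ^ (p + 1) ≤
      (q / σ) ^ (((p : ℝ) + 1) / q) * (f (x k) - f xstar) ^ (((p : ℝ) + 1) / q) := by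
    have e1 : a ^ (p + 1) = (a ^ q) ^ (((p : ℝ) + 1) / q) := by
      rw [← Real.rpow_natCast a (p + 1), ← Real.rpow_mul ha0]
      congr 1
      push_cast
      field_simp
    have e2 : a ^ q = ‖x k - xstar‖ ^ q := by rw [ha, norm_sub_rev]
    rw [e1, e2]
    have e3 : (‖x k - xstar‖ ^ q) ^ (((p : ℝ) + 1) / q) ≤
        (q / σ * (f (x k) - f xstar)) ^ (((p : ℝ) + 1) / q) :=
      Real.rpow_le_rpow (Real.rpow_nonneg (norm_nonneg _) q) hnorm he0
    rw [Real.mul_rpow (le_of_lt (div_pos hq0 hσ)) hΔ] at e3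
    exact e3
  calc f (x (k + 1)) - f xstar ≤ L / (Nat.factorial (p + 1) : ℝ) * a ^ (p + 1) := step1
    _ ≤ L / (Nat.factorial (p + 1) : ℝ) *
        ((q / σ) ^ (((p : ℝ) + 1) / q) * (f (x k) - f xstar) ^ (((p : ℝ) + 1) / q)) :=
        mul_le_mul_of_nonneg_left hpow hcoef
    _ = _ := by ring
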